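/- Let η and D be continuous adapted real-valued processes on [0, T) with η_0 = D_0 = r, where η solves dη_t = dW_t + B dt + (d−1)/(2η_t) dt − dL^{r−η}_t (d > 1 case) and D satisfies dD_t = dW_t + B dt + (d−1)/(2 D_t) dt − dH_t with the same driving Brownian motion W, D taking values in [0,r], and H a non-decreasing adapted process. Then η_t ≥ D_t for all t ∈ [0,T). -/
import Mathlib


open MeasureTheory

/-- Comparison of a reflected Bessel-type process `η` (with local time at `r`)
and a dominated process `D` (with a general non-decreasing correction `H`) driven by the same
Brownian motion: almost surely `η_t ≥ D_t` on `[0,T)`. -/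
theorem stmt5 {Ω : Type*} [MeasurableSpace Ω] (P : Measure Ω) [IsProbabilityMeasure P]
    (n : ℕ) (hn : 1 < n) (B r T : ℝ) (hB : 0 ≤ B) (hr : 0 < r) (hT : 0 < T)
    (η D W Lr H : ℝ → Ω → ℝ)
    (hcont : ∀ᵐ ω ∂P, ContinuousOn (fun t => η t ω) (Set.Ico 0 T) ∧
      ContinuousOn (fun t => D t ω) (Set.Ico 0 T))
    (hinit : ∀ᵐ ω ∂P, η 0 ω = r ∧ D 0 ω = r)
    (hηrange : ∀ᵐ ω ∂P, ∀ t ∈ Set.Ico (0:ℝ) T, 0 < η t ω ∧ η t ω ≤ r)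
    (hDrange : ∀ᵐ ω ∂P, ∀ t ∈ Set.Ico (0:ℝ) T, D t ω ∈ Set.Icc 0 r)
    (hLr : ∀ᵐ ω ∂P, MonotoneOn (fun t => Lr t ω) (Set.Ico 0 T) ∧ Lr 0 ω = 0 ∧
      ∀ s t : ℝ, 0 ≤ s → s ≤ t → t < T → (∀ u ∈ Set.Icc s t, η u ω ≠ r) → Lr t ω = Lr s ω)
    (hH : ∀ᵐ ω ∂P, MonotoneOn (fun t => H t ω) (Set.Ico 0 T) ∧ H 0 ω = 0)
    (hintη : ∀ ω, ∀ t ∈ Set.Ico (0:ℝ) T,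
      IntervalIntegrable (fun s => ((n : ℝ) - 1) / (2 * η s ω)) volume 0 t)
    (hintD : ∀ ω, ∀ t ∈ Set.Ico (0:ℝ) T,
      IntervalIntegrable (fun s => ((n : ℝ) - 1) / (2 * D s ω)) volume 0 t)
    (heqη : ∀ᵐ ω ∂P, ∀ t ∈ Set.Ico (0:ℝ) T,
      η t ω = r + W t ω + B * t + (∫ s in (0:ℝ)..t, ((n : ℝ) - 1) / (2 * η s ω)) - Lr t ω)
    (heqD : ∀ᵐ ω ∂P, ∀ t ∈ Set.Ico (0:ℝ) T,
      D t ω = r + W t ω + B * t + (∫ s in (0:ℝ)..t, ((n : ℝ) - 1) / (2 * D s ω)) - H t ω) :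
    ∀ᵐ ω ∂P, ∀ t ∈ Set.Ico (0:ℝ) T, D t ω ≤ η t ω := by
  filter_upwards [hcont, hinit, hηrange, hDrange, hLr, hH, heqη, heqD] with ω
    ⟨hcη, hcD⟩ ⟨hiη, hiD⟩ hηr hDr ⟨hLmono, hL0, hLflat⟩ ⟨hHmono, hH0⟩ heη heD
  intro t ht
  by_contra hcon
  push_neg at hcon
  -- f = η - D
  set f : ℝ → ℝ := fun u => η u ω - D u ω with hf
  have hft : f t < 0 := by simp [hf]; linarith
  have hf0 : f 0 = 0 := by simp [hf, hiη, hiD]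
  have ht0 : 0 ≤ t := ht.1
  have htT : t < T := ht.2
  have hsub : Set.Icc (0:ℝ) t ⊆ Set.Ico 0 T := fun u hu => ⟨hu.1, lt_of_le_of_lt hu.2 htT⟩
  have hfc : ContinuousOn f (Set.Icc 0 t) :=
    ((hcη.mono hsub).sub (hcD.mono hsub))
  -- last time before t where f ≥ 0
  set S : Set ℝ := Set.Icc 0 t ∩ f ⁻¹' Set.Ici 0 with hS
  have hS0 : (0:ℝ) ∈ S := ⟨⟨le_refl 0, ht0⟩, by simp [hf0]⟩
  have hSc : IsCompact S := by
    apply (isCompact_Icc (a := (0:ℝ)) (b := t)).of_isClosed_subset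
    · exact hfc.preimage_isClosed_of_isClosed isClosed_Icc isClosed_Ici
    · exact Set.inter_subset_left
  obtain ⟨s, hsS, hsdef⟩ : ∃ s, s ∈ S ∧ s = sSup S := ⟨sSup S, hSc.sSup_mem ⟨0, hS0⟩, rfl⟩
  have hs0 : 0 ≤ s := hsS.1.1
  have hst : s ≤ t := hsS.1.2
  have hfs : 0 ≤ f s := hsS.2
  have hsltt : s < t := lt_of_le_of_ne hst (by rintro rfl; linarith)
  have hneg : ∀ u, s < u → u ≤ t → f u < 0 := by
    intro u hsu hut
    by_contra h
    push_neg at h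
    have : u ∈ S := ⟨⟨le_trans hs0 hsu.le, hut⟩, h⟩
    exact absurd (hsdef ▸ le_csSup hSc.bddAbove this) (not_le.mpr hsu)
  -- pick s' ∈ (s, t) with f s' > f t
  have hsmem : s ∈ Set.Icc 0 t := hsS.1
  have hcw : ContinuousWithinAt f (Set.Ioc s t) s :=
    (hfc s hsmem).mono (fun u hu => ⟨le_trans hs0 hu.1.le, hu.2⟩)
  have hev : ∀ᶠ u in nhdsWithin s (Set.Ioc s t), f t < f u :=
    hcw.eventually_const_lt (lt_of_lt_of_le hft hfs)
  have hne : (nhdsWithin s (Set.Ioc s t)).NeBot := left_nhdsWithin_Ioc_neBot hsltt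
  obtain ⟨s', hfs', hss', hs't⟩ := (hev.and (eventually_mem_nhdsWithin)).exists
  have hs'0 : 0 ≤ s' := le_trans hs0 hss'.le
  have hs'T : s' < T := lt_of_le_of_lt hs't htT
  -- key facts on [s', t]
  have hkey : ∀ u ∈ Set.Icc s' t, η u ω < D u ω ∧ 0 < η u ω ∧ D u ω ≤ r := by
    intro u hu
    have hu0 : 0 ≤ u := le_trans hs'0 hu.1
    have huT : u < T := lt_of_le_of_lt hu.2 htT
    have h1 : f u < 0 := hneg u (lt_of_lt_of_le hss' hu.1) hu.2
    exact ⟨by simpa [hf, sub_neg] using h1, (hηr u ⟨hu0, huT⟩).1, (hDr u ⟨hu0, huT⟩).2⟩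
  -- Lr is flat on [s', t]
  have hLeq : Lr t ω = Lr s' ω := by
    apply hLflat s' t hs'0 hs't htT
    intro u hu
    obtain ⟨h1, h2, h3⟩ := hkey u hu
    exact ne_of_lt (lt_of_lt_of_le h1 h3)
  -- H monotone
  have hHle : H s' ω ≤ H t ω := hHmono ⟨hs'0, hs'T⟩ ⟨ht0, htT⟩ hs't
  -- integrals
  set gη : ℝ → ℝ := fun u => ((n : ℝ) - 1) / (2 * η u ω) with hgη
  set gD : ℝ → ℝ := fun u => ((n : ℝ) - 1) / (2 * D u ω) with hgD
  have huIcc : Set.uIcc s' t ⊆ Set.uIcc (0:ℝ) t := by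
    rw [Set.uIcc_of_le hs't, Set.uIcc_of_le ht0]
    exact Set.Icc_subset_Icc hs'0 le_rfl
  have hintη' : IntervalIntegrable gη volume s' t :=
    (hintη ω t ht).mono_set huIcc
  have hintD' : IntervalIntegrable gD volume s' t :=
    (hintD ω t ht).mono_set huIcc
  have huIcc2 : Set.uIcc (0:ℝ) s' ⊆ Set.uIcc (0:ℝ) t := by
    rw [Set.uIcc_of_le hs'0, Set.uIcc_of_le ht0]
    exact Set.Icc_subset_Icc le_rfl hs't
  have hintη0 : IntervalIntegrable gη volume 0 s' := (hintη ω t ht).mono_set huIcc2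
  have hintD0 : IntervalIntegrable gD volume 0 s' := (hintD ω t ht).mono_set huIcc2
  have haddη : (∫ u in (0:ℝ)..s', gη u) + (∫ u in s'..t, gη u) = ∫ u in (0:ℝ)..t, gη u :=
    intervalIntegral.integral_add_adjacent_intervals hintη0 hintη'
  have haddD : (∫ u in (0:ℝ)..s', gD u) + (∫ u in s'..t, gD u) = ∫ u in (0:ℝ)..t, gD u :=
    intervalIntegral.integral_add_adjacent_intervals hintD0 hintD'
  have hmono : (∫ u in s'..t, gD u) ≤ ∫ u in s'..t, gη u := by
    apply intervalIntegral.integral_mono_on hs't hintD' hintη'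
    intro u hu
    obtain ⟨h1, h2, h3⟩ := hkey u hu
    have hn1 : (0:ℝ) ≤ (n : ℝ) - 1 := by
      have : (1:ℝ) ≤ (n : ℝ) := by exact_mod_cast hn.le
      linarith
    apply div_le_div_of_nonneg_left hn1 (by linarith) (by linarith)
  -- the equations
  have heη_t := heη t ⟨ht0, htT⟩
  have heη_s' := heη s' ⟨hs'0, hs'T⟩
  have heD_t := heD t ⟨ht0, htT⟩
  have heD_s' := heD s' ⟨hs'0, hs'T⟩
  have hft' : f t < f s' := hfs'
  simp only [hf] at hft'
  rw [heη_t, heη_s', heD_t, heD_s'] at hft'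
  simp only [hgη, hgD] at haddη haddD hmono
  rw [hLeq] at hft'
  linarith
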